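/- Let $B \in \mathbb{R}^{d \times d}$ be essentially non-negative (i.e., all off-diagonal entries of $B$ are nonnegative). If $e^B = I$, then $B = 0$. -/

import Mathlib

open NormedSpace

theorem stmt11 {d : ℕ} (B : Matrix (Fin d) (Fin d) ℝ)
    (hB : ∀ i j, i ≠ j → 0 ≤ B i j)
    (h : NormedSpace.exp B = 1) : B = 0 := by
  classical
  set c : ℝ := ∑ i, |B i i| with hc
  have hcB : ∀ i, 0 ≤ B i i + c := by
    intro i
    have h1 : |B i i| ≤ c :=
      Finset.single_le_sum (f := fun i => |B i i|) (fun i _ => abs_nonneg _) (Finset.mem_univ i)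
    have h2 : -B i i ≤ |B i i| := neg_le_abs _
    linarith
  set A : Matrix (Fin d) (Fin d) ℝ := B + Matrix.diagonal (fun _ => c) with hA
  have hAentry : ∀ i j, A i j = B i j + if i = j then c else 0 := by
    intro i j
    simp [hA, Matrix.diagonal, Matrix.add_apply]
  have hAnn : ∀ i j, 0 ≤ A i j := by
    intro i j
    rw [hAentry]
    by_cases hij : i = j
    · simpa [hij] using hcB j
    · simpa [hij] using hB i j hij
  have hpow : ∀ n, ∀ i j, 0 ≤ (A ^ n) i j := by
    intro n
    induction n with
    | zero => intro i j; by_cases hij : i = j <;> simp [Matrix.one_apply, hij]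
    | succ n ih =>
      intro i j
      rw [pow_succ, Matrix.mul_apply]
      exact Finset.sum_nonneg fun k _ => mul_nonneg (ih i k) (hAnn k j)
  -- exp A = diagonal of Real.exp c
  have hcomm : Commute B (Matrix.diagonal fun _ : Fin d => c) := by
    rw [← Matrix.smul_one_eq_diagonal]
    exact (Commute.one_right B).smul_right c
  have hexpA : NormedSpace.exp A = Matrix.diagonal (fun _ => Real.exp c) := by
    rw [hA, Matrix.exp_add_of_commute B _ hcomm, h, one_mul, Matrix.exp_diagonal]
    have he : (NormedSpace.exp fun _ : Fin d => c) = fun _ : Fin d => Real.exp c := by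
      funext i
      rw [Pi.coe_exp, ← Real.exp_eq_exp_ℝ]
    rw [he]
  -- entrywise sums
  have hS : HasSum (fun n : ℕ => ((n.factorial : ℝ)⁻¹) • A ^ n) (NormedSpace.exp A) :=
    by
    letI : SeminormedRing (Matrix (Fin d) (Fin d) ℝ) := Matrix.linftyOpSemiNormedRing
    letI : NormedRing (Matrix (Fin d) (Fin d) ℝ) := Matrix.linftyOpNormedRing
    letI : NormedAlgebra ℝ (Matrix (Fin d) (Fin d) ℝ) := Matrix.linftyOpNormedAlgebra
    exact NormedSpace.exp_series_hasSum_exp' A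
  have hoffdiag : ∀ i j, i ≠ j → B i j = 0 := by
    intro i j hij
    have hcont : Continuous fun M : Matrix (Fin d) (Fin d) ℝ => M i j := by
      exact (continuous_apply j).comp (continuous_apply i)
    have hE : HasSum (fun n : ℕ => (n.factorial : ℝ)⁻¹ * (A ^ n) i j)
        ((NormedSpace.exp A) i j) := by
      have := hS.map (AddMonoidHom.mk' (fun M : Matrix (Fin d) (Fin d) ℝ => M i j)
        (fun x y => rfl)) hcont
      exact this
    have hzero : (NormedSpace.exp A) i j = 0 := by
      rw [hexpA, Matrix.diagonal_apply_ne _ hij]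
    have hle : ((Nat.factorial 1 : ℕ) : ℝ)⁻¹ * (A ^ 1) i j ≤ (NormedSpace.exp A) i j :=
      le_hasSum hE 1 (fun n _ => mul_nonneg (by positivity) (hpow n i j))
    have hge : 0 ≤ A i j := hAnn i j
    have hAij : A i j = 0 := by
      simp only [pow_one, Nat.factorial_one, Nat.cast_one, inv_one, one_mul, hzero] at hle
      linarith
    have := hAentry i j
    rw [if_neg hij, add_zero] at this
    rw [← this, hAij]
  -- B is diagonal
  have hBdiag : B = Matrix.diagonal (fun i => B i i) := by
    ext i j
    by_cases hij : i = j
    · subst hij; simp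
    · rw [Matrix.diagonal_apply_ne _ hij]; exact hoffdiag i j hij
  rw [hBdiag, Matrix.exp_diagonal] at h
  have hdiagone : Matrix.diagonal (NormedSpace.exp fun i => B i i)
      = Matrix.diagonal (fun _ : Fin d => (1 : ℝ)) := by
    rw [h, Matrix.diagonal_one]
  have hdone : ∀ i, Real.exp (B i i) = 1 := by
    intro i
    have := congrFun (Matrix.diagonal_injective hdiagone) i
    rw [Pi.coe_exp, ← Real.exp_eq_exp_ℝ] at this
    exact this
  have hdzero : ∀ i, B i i = 0 := by
    intro i
    have h0 : Real.exp (B i i) = Real.exp 0 := by simpa using hdone i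
    exact Real.exp_eq_exp.mp h0
  rw [hBdiag]
  ext i j
  by_cases hij : i = j
  · subst hij; simp [hdzero]
  · simp [Matrix.diagonal_apply_ne _ hij]
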